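/- Let d = d₁ + d₂ and write vectors z ∈ ℝ^d as z = (z₁, z₂) ∈ ℝ^{d₁} × ℝ^{d₂}. Let a = (a₁, a₂) ∈ ℝ^d with a₁ ≠ 0, let L > 0 and α ∈ (0,1), and let Z be the symmetric d×d matrix with quadratic form ⟨Zz, z⟩ = Lα‖a‖^{α−2}(‖z‖² + (α−2)⟨a, z⟩²/‖a‖²) (the Hessian at a of the map x ↦ L‖x‖^α). If X, Y are symmetric d×d matrices satisfying ⟨Xz, z⟩ − ⟨Yz', z'⟩ ≤ ⟨Z(z−z'), z−z'⟩ for all z, z' ∈ ℝ^d, then the top-left d₁×d₁ blocks X₁, Y₁ of X and Y satisfy trace(X₁ − Y₁) ≤ 4Lα‖a‖^{α−2}(1 + (α−2)‖a₁‖²/‖a‖²). -/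

import Mathlib

open Matrix RealInnerProductSpace

/-- **Trace estimate on the first diagonal block for the toy mixed model.**
With `d = d₁ + d₂`, `a = (a₁, a₂)`, `a₁ ≠ 0`, and `Z` the Hessian at `a` of `x ↦ L‖x‖^α`
(i.e. `⟨Zz, z⟩ = Lα‖a‖^{α−2}(‖z‖² + (α−2)⟨a,z⟩²/‖a‖²)`), if symmetric matrices `X, Y`
satisfy `⟨Xz, z⟩ − ⟨Yz', z'⟩ ≤ ⟨Z(z−z'), z−z'⟩` for all `z, z'`, then the top-left blocks
satisfy `trace(X₁ − Y₁) ≤ 4Lα‖a‖^{α−2}(1 + (α−2)‖a₁‖²/‖a‖²)`. -/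
theorem trace_estimate_first_block_toy_model {d₁ d₂ : ℕ}
    (L α : ℝ) (hL : 0 < L) (hα : α ∈ Set.Ioo (0:ℝ) 1)
    (a : EuclideanSpace ℝ (Fin d₁ ⊕ Fin d₂))
    (a₁ : EuclideanSpace ℝ (Fin d₁)) (a₂ : EuclideanSpace ℝ (Fin d₂))
    (ha₁ : ∀ i, a (Sum.inl i) = a₁ i) (ha₂ : ∀ i, a (Sum.inr i) = a₂ i)
    (ha₁ne : a₁ ≠ 0)
    (X Y Z : Matrix (Fin d₁ ⊕ Fin d₂) (Fin d₁ ⊕ Fin d₂) ℝ)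
    (hX : X.IsSymm) (hY : Y.IsSymm) (hZ : Z.IsSymm)
    (hZquad : ∀ z : EuclideanSpace ℝ (Fin d₁ ⊕ Fin d₂),
      Z.mulVec z ⬝ᵥ z
        = L * α * ‖a‖ ^ (α - 2) * (‖z‖ ^ 2 + (α - 2) * ⟪a, z⟫ ^ 2 / ‖a‖ ^ 2))
    (h : ∀ z z' : EuclideanSpace ℝ (Fin d₁ ⊕ Fin d₂),
      X.mulVec z ⬝ᵥ z - Y.mulVec z' ⬝ᵥ z' ≤ Z.mulVec (z - z') ⬝ᵥ (z - z')) :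
    (X.toBlocks₁₁ - Y.toBlocks₁₁).trace
      ≤ 4 * L * α * ‖a‖ ^ (α - 2) * (1 + (α - 2) * ‖a₁‖ ^ 2 / ‖a‖ ^ 2) := by
  have hna : (‖a₁‖ : ℝ) ≠ 0 := norm_ne_zero_iff.mpr ha₁ne
  set c : Fin d₁ → ℝ := fun i => a₁ i / ‖a₁‖ with hc
  set q : EuclideanSpace ℝ (Fin d₁ ⊕ Fin d₂) :=
    WithLp.toLp 2 (Sum.elim c (fun _ => 0) : (Fin d₁ ⊕ Fin d₂) → ℝ) with hqdef
  obtain ⟨qf, hqf⟩ : ∃ qf : (Fin d₁ ⊕ Fin d₂) → ℝ, qf = q := ⟨q, rfl⟩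
  have hq_inl : ∀ i, q (Sum.inl i) = c i := fun _ => rfl
  have hq_inr : ∀ i, q (Sum.inr i) = 0 := fun _ => rfl
  -- norm of a₁ as a sum
  have ha₁norm : ‖a₁‖ ^ 2 = ∑ i, a₁ i * a₁ i := by
    rw [← real_inner_self_eq_norm_sq]
    simp only [PiLp.inner_apply, RCLike.inner_apply, conj_trivial]
  have hsumc2 : ∑ i, c i * c i = 1 := by
    have h1 : ∑ i, c i * c i = (∑ i, a₁ i * a₁ i) / (‖a₁‖ * ‖a₁‖) := by
      rw [Finset.sum_div]
      exact Finset.sum_congr rfl fun i _ => by rw [hc]; field_simp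
    rw [h1, ← ha₁norm]
    field_simp
  -- inner products involving q
  have hqq : ⟪q, q⟫ = 1 := by
    simp only [PiLp.inner_apply, RCLike.inner_apply, starRingEnd_apply, star_trivial]
    rw [Fintype.sum_sum_type]
    simpa [hq_inl, hq_inr] using hsumc2
  have hqnorm : ‖q‖ ^ 2 = 1 := by rw [← real_inner_self_eq_norm_sq, hqq]
  have haq : ⟪a, q⟫ = ‖a₁‖ := by
    simp only [PiLp.inner_apply, RCLike.inner_apply, starRingEnd_apply, star_trivial]
    rw [Fintype.sum_sum_type]
    have h1 : ∑ i, q (Sum.inl i) * a (Sum.inl i) = (∑ i, a₁ i * a₁ i) / ‖a₁‖ := by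
      rw [Finset.sum_div]
      exact Finset.sum_congr rfl fun i _ => by rw [ha₁ i, hq_inl, hc]; field_simp
    simp only [hq_inr, mul_zero, zero_mul, Finset.sum_const_zero, add_zero, h1, ← ha₁norm]
    field_simp
  have hZq : Z.mulVec q ⬝ᵥ q
      = L * α * ‖a‖ ^ (α - 2) * (1 + (α - 2) * ‖a₁‖ ^ 2 / ‖a‖ ^ 2) := by
    rw [hZquad q, hqnorm, haq]
  -- the matrix M = X - Y
  set M : Matrix (Fin d₁ ⊕ Fin d₂) (Fin d₁ ⊕ Fin d₂) ℝ := X - Y with hMdef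
  have hMsymm : Mᵀ = M := by
    rw [hMdef, Matrix.transpose_sub, hX.eq, hY.eq]
  have hBsymm : ∀ u v : (Fin d₁ ⊕ Fin d₂) → ℝ,
      M.mulVec u ⬝ᵥ v = M.mulVec v ⬝ᵥ u := by
    intro u v
    rw [dotProduct_comm, dotProduct_mulVec, ← Matrix.mulVec_transpose, hMsymm]
  have hMmul : ∀ v : (Fin d₁ ⊕ Fin d₂) → ℝ,
      M.mulVec v = X.mulVec v - Y.mulVec v := fun v => Matrix.sub_mulVec X Y v
  -- X - Y is negative semidefinite
  have hQ0 : ∀ v : EuclideanSpace ℝ (Fin d₁ ⊕ Fin d₂), M.mulVec v ⬝ᵥ v ≤ 0 := by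
    intro v
    have hv := h v v
    rw [sub_self] at hv
    have h0 : Z.mulVec (0 : (Fin d₁ ⊕ Fin d₂) → ℝ)
        ⬝ᵥ (0 : (Fin d₁ ⊕ Fin d₂) → ℝ) = 0 := by
      simp
    rw [h0] at hv
    calc M.mulVec v ⬝ᵥ v = X.mulVec v ⬝ᵥ v - Y.mulVec v ⬝ᵥ v := by
          rw [hMmul v, sub_dotProduct]
      _ ≤ 0 := hv
  -- key estimate in direction q
  have hQq : M.mulVec qf ⬝ᵥ qf ≤ 4 * (Z.mulVec q ⬝ᵥ q) := by
    have hv := h q (-q)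
    have h2 : WithLp.ofLp q - WithLp.ofLp (-q) = WithLp.ofLp (q + q) := by
      rw [WithLp.ofLp_neg, WithLp.ofLp_add, sub_neg_eq_add]
    rw [h2] at hv
    have hexp : Z.mulVec ((q + q : EuclideanSpace ℝ (Fin d₁ ⊕ Fin d₂)))
        ⬝ᵥ ((q + q : EuclideanSpace ℝ (Fin d₁ ⊕ Fin d₂)))
        = 4 * (Z.mulVec q ⬝ᵥ q) := by
      have h3 : Z.mulVec (q + q : (Fin d₁ ⊕ Fin d₂) → ℝ) ⬝ᵥ (q + q : (Fin d₁ ⊕ Fin d₂) → ℝ)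
          = 4 * (Z.mulVec q ⬝ᵥ q) := by
        rw [Matrix.mulVec_add, add_dotProduct, dotProduct_add]
        ring
      exact h3
    rw [hexp] at hv
    have hneg : Y.mulVec (-q : EuclideanSpace ℝ (Fin d₁ ⊕ Fin d₂))
        ⬝ᵥ (-q : EuclideanSpace ℝ (Fin d₁ ⊕ Fin d₂)) = Y.mulVec q ⬝ᵥ q := by
      have h3 : Y.mulVec (-q : (Fin d₁ ⊕ Fin d₂) → ℝ) ⬝ᵥ (-q : (Fin d₁ ⊕ Fin d₂) → ℝ)
          = Y.mulVec q ⬝ᵥ q := by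
        rw [Matrix.mulVec_neg, neg_dotProduct, dotProduct_neg, neg_neg]
      exact h3
    rw [hneg] at hv
    calc M.mulVec qf ⬝ᵥ qf = X.mulVec q ⬝ᵥ q - Y.mulVec q ⬝ᵥ q := by
          rw [hqf, hMmul q, sub_dotProduct]
      _ ≤ 4 * (Z.mulVec q ⬝ᵥ q) := hv
  -- basis vectors and remainders
  set e : Fin d₁ → ((Fin d₁ ⊕ Fin d₂) → ℝ) :=
    fun i => Pi.single (Sum.inl i) 1 with hedef
  set r : Fin d₁ → ((Fin d₁ ⊕ Fin d₂) → ℝ) :=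
    fun i => e i - c i • qf with hrdef
  have hsplit : ∀ i, e i = r i + c i • qf := by
    intro i; simp only [hrdef]; abel
  -- quadratic expansion
  have hexpand : ∀ i, M.mulVec (e i) ⬝ᵥ (e i)
      = M.mulVec (r i) ⬝ᵥ (r i) + 2 * (c i * (M.mulVec qf ⬝ᵥ (r i)))
        + c i * c i * (M.mulVec qf ⬝ᵥ qf) := by
    intro i
    conv_lhs => rw [hsplit i]
    simp only [Matrix.mulVec_add, Matrix.mulVec_smul, add_dotProduct, dotProduct_add,
      smul_dotProduct, dotProduct_smul, smul_eq_mul]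
    rw [hBsymm (r i) qf]
    ring
  -- diagonal entries as quadratic forms
  have hdiag : ∀ i, M (Sum.inl i) (Sum.inl i) = M.mulVec (e i) ⬝ᵥ (e i) := by
    intro i
    simp [hedef, Matrix.mulVec_single, dotProduct_single]
  -- the cross terms sum to zero
  have hcrossq : ∑ i, c i * (M.mulVec qf ⬝ᵥ e i) = M.mulVec qf ⬝ᵥ qf := by
    have h1 : ∀ i, M.mulVec qf ⬝ᵥ e i = M.mulVec qf (Sum.inl i) := by
      intro i; simp [hedef, dotProduct_single]
    have hqfl : ∀ i, qf (Sum.inl i) = c i := fun i => by rw [hqf]; exact hq_inl i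
    have hqfr : ∀ i, qf (Sum.inr i) = 0 := fun i => by rw [hqf]; exact hq_inr i
    have h2 : M.mulVec qf ⬝ᵥ qf = ∑ i, M.mulVec qf (Sum.inl i) * c i := by
      rw [dotProduct, Fintype.sum_sum_type]
      simp only [hqfl, hqfr, mul_zero, Finset.sum_const_zero, add_zero]
    rw [h2]
    exact Finset.sum_congr rfl fun i _ => by rw [h1 i]; ring
  have hre : ∀ i, M.mulVec qf ⬝ᵥ r i
      = M.mulVec qf ⬝ᵥ e i - c i * (M.mulVec qf ⬝ᵥ qf) := by
    intro i
    simp only [hrdef]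
    rw [dotProduct_sub, dotProduct_smul, smul_eq_mul]
  have hcross : ∑ i, c i * (M.mulVec qf ⬝ᵥ r i) = 0 := by
    have h1 : ∀ i, c i * (M.mulVec qf ⬝ᵥ r i)
        = c i * (M.mulVec qf ⬝ᵥ e i) - c i * c i * (M.mulVec qf ⬝ᵥ qf) := by
      intro i; rw [hre i]; ring
    rw [Finset.sum_congr rfl fun i _ => h1 i, Finset.sum_sub_distrib, hcrossq,
      ← Finset.sum_mul, hsumc2]
    ring
  -- trace computation
  have htrace : (X.toBlocks₁₁ - Y.toBlocks₁₁).trace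
      = ∑ i, M.mulVec (e i) ⬝ᵥ (e i) := by
    rw [Matrix.trace]
    refine Finset.sum_congr rfl fun i _ => ?_
    rw [← hdiag i]
    simp [Matrix.diag, Matrix.toBlocks₁₁, hMdef, Matrix.sub_apply]
  rw [htrace]
  have hsum : ∑ i, M.mulVec (e i) ⬝ᵥ (e i)
      = (∑ i, M.mulVec (r i) ⬝ᵥ (r i)) + M.mulVec qf ⬝ᵥ qf := by
    rw [Finset.sum_congr rfl fun i _ => hexpand i]
    rw [Finset.sum_add_distrib, Finset.sum_add_distrib, ← Finset.mul_sum, hcross,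
      ← Finset.sum_mul, hsumc2]
    ring
  rw [hsum]
  have hrest : (∑ i, M.mulVec (r i) ⬝ᵥ (r i)) ≤ 0 :=
    Finset.sum_nonpos fun i _ => hQ0 (WithLp.toLp 2 (r i))
  calc (∑ i, M.mulVec (r i) ⬝ᵥ (r i)) + M.mulVec qf ⬝ᵥ qf
      ≤ 4 * (Z.mulVec q ⬝ᵥ q) := by linarith [hQq]
    _ = 4 * L * α * ‖a‖ ^ (α - 2) * (1 + (α - 2) * ‖a₁‖ ^ 2 / ‖a‖ ^ 2) := by
        rw [hZq]; ring
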